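/- Let (Ω,𝓕,ℙ) be a probability space, let x† be a square-integrable random vector in ℝⁿ with mean μ and positive definite covariance Σ_x, and let ε be a square-integrable random vector in ℝᵐ with mean 0 and positive definite covariance Σ_ε, with x† and ε uncorrelated (𝔼[(x†−μ)εᵀ] = 0). Let A ∈ ℝ^{m×n}. Then the choices Ω = Σ_ε⁻¹, any R ∈ ℝ^{n×n} with RᵀR = Σ_x⁻¹, and x₀ = μ minimize, over all positive definite noise weights Ω ∈ ℝ^{m×m}, all R ∈ ℝ^{n×n} with AᵀΩA + RᵀR invertible, and all x₀ ∈ ℝⁿ, the risk 𝔼‖(AᵀΩA + RᵀR)⁻¹(AᵀΩ(Ax†+ε) + RᵀRx₀) − x†‖² of the noise-weighted Tikhonov reconstruction; moreover, the resulting affine map equals the LMMSE estimator, so its risk equals the minimal risk over all affine maps. -/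

import Mathlib

open MeasureTheory Matrix

/-- The risk `𝔼‖W(Ax†+ε)+b−x†‖²` of the affine reconstruction map `y ↦ Wy + b`. -/
noncomputable def affineRisk {Ωs : Type*} [MeasurableSpace Ωs] (P : Measure Ωs)
    {n m : ℕ} (x : Ωs → Fin n → ℝ) (ε : Ωs → Fin m → ℝ)
    (A : Matrix (Fin m) (Fin n) ℝ) (W : Matrix (Fin n) (Fin m) ℝ) (b : Fin n → ℝ) : ℝ :=
  ∫ ω, ∑ i, (W.mulVec (A.mulVec (x ω) + ε ω) + b - x ω) i ^ 2 ∂P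

/-- The risk of the noise-weighted Tikhonov reconstruction
`x̂(y) = (AᵀΩA + RᵀR)⁻¹(AᵀΩ y + RᵀR x₀)` with noise weight `O`, regularizer `R`
and offset `x₀`. -/
noncomputable def tikhonovRisk {Ωs : Type*} [MeasurableSpace Ωs] (P : Measure Ωs)
    {n m : ℕ} (x : Ωs → Fin n → ℝ) (ε : Ωs → Fin m → ℝ)
    (A : Matrix (Fin m) (Fin n) ℝ) (O : Matrix (Fin m) (Fin m) ℝ)
    (R : Matrix (Fin n) (Fin n) ℝ) (x₀ : Fin n → ℝ) : ℝ :=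
  affineRisk P x ε A ((Aᵀ * O * A + Rᵀ * R)⁻¹ * (Aᵀ * O))
    (((Aᵀ * O * A + Rᵀ * R)⁻¹ * (Rᵀ * R)).mulVec x₀)

set_option linter.unusedSectionVars false
set_option maxHeartbeats 1000000

section helpers

variable {Ωs : Type*} [MeasurableSpace Ωs] {P : Measure Ωs} [IsProbabilityMeasure P]

lemma my_integrable_mul {f g : Ωs → ℝ} (hf : MemLp f 2 P) (hg : MemLp g 2 P) :
    Integrable (fun ω => f ω * g ω) P := by
  have h : MemLp (g • f) 1 P := hf.smul hg
  have := memLp_one_iff_integrable.mp h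
  have h2 : Integrable (fun ω => g ω * f ω) P := this
  simpa [mul_comm] using h2

lemma my_sq_expand {f g : Ωs → ℝ} (hf : MemLp f 2 P) (hg : MemLp g 2 P) (c : ℝ)
    (hf0 : ∫ ω, f ω ∂P = 0) (hg0 : ∫ ω, g ω ∂P = 0)
    (hfg : ∫ ω, f ω * g ω ∂P = 0) :
    ∫ ω, (f ω + g ω + c) ^ 2 ∂P
      = (∫ ω, f ω * f ω ∂P) + (∫ ω, g ω * g ω ∂P) + c ^ 2 := by
  have hff := my_integrable_mul hf hf
  have hgg := my_integrable_mul hg hg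
  have hfg' := my_integrable_mul hf hg
  have hfi : Integrable f P := hf.integrable one_le_two
  have hgi : Integrable g P := hg.integrable one_le_two
  have hpt : ∀ ω, (f ω + g ω + c) ^ 2
      = (f ω * f ω + g ω * g ω + c ^ 2)
        + (2 * (f ω * g ω) + (2 * c * f ω + 2 * c * g ω)) := fun ω => by ring
  calc ∫ ω, (f ω + g ω + c) ^ 2 ∂P
      = ∫ ω, (f ω * f ω + g ω * g ω + c ^ 2)
          + (2 * (f ω * g ω) + (2 * c * f ω + 2 * c * g ω)) ∂P := by
        exact integral_congr_ae (Filter.Eventually.of_forall hpt)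
    _ = (∫ ω, f ω * f ω + g ω * g ω + c ^ 2 ∂P)
          + ∫ ω, 2 * (f ω * g ω) + (2 * c * f ω + 2 * c * g ω) ∂P := by
        exact integral_add ((hff.add hgg).add (integrable_const _))
          ((hfg'.const_mul 2).add ((hfi.const_mul _).add (hgi.const_mul _)))
    _ = (∫ ω, f ω * f ω ∂P) + (∫ ω, g ω * g ω ∂P) + c ^ 2 := by
        have h1 : Integrable (fun ω => f ω * f ω + g ω * g ω) P := hff.add hgg
        have h2 : Integrable (fun ω => 2 * c * f ω + 2 * c * g ω) P :=
          (hfi.const_mul _).add (hgi.const_mul _)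
        rw [integral_add h1 (integrable_const _), integral_add hff hgg,
          integral_add (hfg'.const_mul 2) h2,
          integral_add (hfi.const_mul _) (hgi.const_mul _),
          integral_const_mul, integral_const_mul, integral_const_mul,
          hf0, hg0, hfg]
        simp

lemma my_sum_mul_sum {ι κ : Type*} [Fintype ι] [Fintype κ]
    (u : ι → ℝ) (v : κ → ℝ) (f : ι → Ωs → ℝ) (g : κ → Ωs → ℝ)
    (hf : ∀ j, MemLp (f j) 2 P) (hg : ∀ k, MemLp (g k) 2 P) :
    ∫ ω, (∑ j, u j * f j ω) * (∑ k, v k * g k ω) ∂P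
      = ∑ j, ∑ k, u j * v k * ∫ ω, f j ω * g k ω ∂P := by
  have hpt : ∀ ω, (∑ j, u j * f j ω) * (∑ k, v k * g k ω)
      = ∑ j, ∑ k, u j * v k * (f j ω * g k ω) := by
    intro ω
    rw [Finset.sum_mul_sum]
    exact Finset.sum_congr rfl fun j _ => Finset.sum_congr rfl fun k _ => by ring
  rw [integral_congr_ae (Filter.Eventually.of_forall hpt)]
  rw [integral_finset_sum _ (fun j _ => integrable_finset_sum _
    (fun k _ => (my_integrable_mul (hf j) (hg k)).const_mul _))]
  refine Finset.sum_congr rfl fun j _ => ?_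
  rw [integral_finset_sum _ (fun k _ => (my_integrable_mul (hf j) (hg k)).const_mul _)]
  exact Finset.sum_congr rfl fun k _ => integral_const_mul _ _

lemma my_trace_form {p q : ℕ} (B : Matrix (Fin p) (Fin q) ℝ) (S : Matrix (Fin q) (Fin q) ℝ) :
    ∑ i, ∑ j, ∑ j', B i j * B i j' * S j j' = Matrix.trace (B * S * Bᵀ) := by
  simp only [Matrix.trace, Matrix.diag, Matrix.mul_apply, Matrix.transpose_apply,
    Finset.sum_mul]
  refine Finset.sum_congr rfl fun i _ => ?_
  rw [Finset.sum_comm]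
  exact Finset.sum_congr rfl fun j' _ => Finset.sum_congr rfl fun j _ => by ring

lemma my_trace_nonneg {p : ℕ} {N : Matrix (Fin p) (Fin p) ℝ} (h : N.PosSemidef) :
    0 ≤ Matrix.trace N := by
  refine Finset.sum_nonneg fun i _ => ?_
  have := h.diag_nonneg (i := i)
  simpa [Matrix.mulVec, dotProduct, Pi.single_apply] using this

end helpers

/-- The raw risk formula. -/
lemma affineRisk_eq {Ωs : Type*} [MeasurableSpace Ωs]
    (P : Measure Ωs) [IsProbabilityMeasure P] {n m : ℕ}
    (x : Ωs → Fin n → ℝ) (ε : Ωs → Fin m → ℝ)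
    (hx : MemLp x 2 P) (hε : MemLp ε 2 P)
    (μx : Fin n → ℝ) (hμx : ∫ ω, x ω ∂P = μx)
    (Sx : Matrix (Fin n) (Fin n) ℝ)
    (hSx : ∀ i j, ∫ ω, (x ω i - μx i) * (x ω j - μx j) ∂P = Sx i j)
    (hεmean : ∫ ω, ε ω ∂P = 0)
    (Se : Matrix (Fin m) (Fin m) ℝ)
    (hSe : ∀ i j, ∫ ω, ε ω i * ε ω j ∂P = Se i j)
    (huncorr : ∀ i j, ∫ ω, (x ω i - μx i) * ε ω j ∂P = 0)
    (A : Matrix (Fin m) (Fin n) ℝ)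
    (W : Matrix (Fin n) (Fin m) ℝ) (b : Fin n → ℝ) :
    affineRisk P x ε A W b
      = Matrix.trace ((W * A - 1) * Sx * (W * A - 1)ᵀ) + Matrix.trace (W * Se * Wᵀ)
        + ∑ i, ((W * A - 1).mulVec μx + b) i ^ 2 := by
  set B := W * A - 1 with hB
  -- component L² facts
  have hxj : ∀ j, MemLp (fun ω => x ω j) 2 P := fun j =>
    (ContinuousLinearMap.proj (R := ℝ) (φ := fun _ : Fin n => ℝ) j).comp_memLp' hx
  have hεk : ∀ k, MemLp (fun ω => ε ω k) 2 P := fun k =>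
    (ContinuousLinearMap.proj (R := ℝ) (φ := fun _ : Fin m => ℝ) k).comp_memLp' hε
  have hxtj : ∀ j, MemLp (fun ω => x ω j - μx j) 2 P := fun j =>
    (hxj j).sub (memLp_const _)
  -- component means
  have hxmean' : ∀ j, ∫ ω, x ω j ∂P = μx j := by
    intro j
    have hxi : Integrable x P := hx.integrable one_le_two
    have := (ContinuousLinearMap.proj (R := ℝ) (φ := fun _ : Fin n => ℝ) j).integral_comp_comm hxi
    rw [hμx] at this
    exact this
  have hxt0 : ∀ j, ∫ ω, x ω j - μx j ∂P = 0 := by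
    intro j
    rw [integral_sub ((hxj j).integrable one_le_two) (integrable_const _),
      hxmean' j, integral_const]
    simp
  have hε0 : ∀ k, ∫ ω, ε ω k ∂P = 0 := by
    intro k
    have hεi : Integrable ε P := hε.integrable one_le_two
    have := (ContinuousLinearMap.proj (R := ℝ) (φ := fun _ : Fin m => ℝ) k).integral_comp_comm hεi
    rw [hεmean] at this
    exact this
  -- pieces
  set f : Fin n → Ωs → ℝ := fun i ω => ∑ j, B i j * (x ω j - μx j) with hf
  set g : Fin n → Ωs → ℝ := fun i ω => ∑ k, W i k * ε ω k with hg
  set c : Fin n → ℝ := fun i => (B.mulVec μx + b) i with hc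
  have hfmem : ∀ i, MemLp (f i) 2 P := fun i =>
    memLp_finset_sum _ (fun j _ => ((hxtj j).const_mul (B i j)))
  have hgmem : ∀ i, MemLp (g i) 2 P := fun i =>
    memLp_finset_sum _ (fun k _ => ((hεk k).const_mul (W i k)))
  have hf0 : ∀ i, ∫ ω, f i ω ∂P = 0 := by
    intro i
    rw [hf]
    rw [integral_finset_sum _ (fun j _ => (((hxtj j).integrable one_le_two).const_mul _))]
    refine Finset.sum_eq_zero fun j _ => ?_
    rw [integral_const_mul, hxt0 j, mul_zero]
  have hg0 : ∀ i, ∫ ω, g i ω ∂P = 0 := by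
    intro i
    rw [hg]
    rw [integral_finset_sum _ (fun k _ => (((hεk k).integrable one_le_two).const_mul _))]
    refine Finset.sum_eq_zero fun k _ => ?_
    rw [integral_const_mul, hε0 k, mul_zero]
  have hfg0 : ∀ i, ∫ ω, f i ω * g i ω ∂P = 0 := by
    intro i
    rw [hf, hg]
    rw [my_sum_mul_sum (B i) (W i) _ _ hxtj hεk]
    refine Finset.sum_eq_zero fun j _ => Finset.sum_eq_zero fun k _ => ?_
    rw [huncorr j k, mul_zero]
  have hff : ∀ i, ∫ ω, f i ω * f i ω ∂P = ∑ j, ∑ j', B i j * B i j' * Sx j j' := by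
    intro i
    rw [hf, my_sum_mul_sum (B i) (B i) _ _ hxtj hxtj]
    exact Finset.sum_congr rfl fun j _ => Finset.sum_congr rfl fun j' _ => by
      rw [hSx j j']
  have hgg : ∀ i, ∫ ω, g i ω * g i ω ∂P = ∑ k, ∑ k', W i k * W i k' * Se k k' := by
    intro i
    rw [hg, my_sum_mul_sum (W i) (W i) _ _ hεk hεk]
    exact Finset.sum_congr rfl fun k _ => Finset.sum_congr rfl fun k' _ => by
      rw [hSe k k']
  -- pointwise decomposition
  have hvec : ∀ ω, W.mulVec (A.mulVec (x ω) + ε ω) + b - x ω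
      = B.mulVec (x ω - μx) + W.mulVec (ε ω) + (B.mulVec μx + b) := by
    intro ω
    rw [hB]
    simp only [Matrix.mulVec_add, Matrix.mulVec_sub, Matrix.sub_mulVec, Matrix.one_mulVec,
      ← Matrix.mulVec_mulVec]
    abel
  have hpt : ∀ ω, ∑ i, (W.mulVec (A.mulVec (x ω) + ε ω) + b - x ω) i ^ 2
      = ∑ i, (f i ω + g i ω + c i) ^ 2 := by
    intro ω
    refine Finset.sum_congr rfl fun i _ => ?_
    rw [hvec ω]
    have h1 : (B.mulVec (x ω - μx)) i = f i ω := by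
      simp [hf, Matrix.mulVec, dotProduct]
    have h2 : (W.mulVec (ε ω)) i = g i ω := by
      simp [hg, Matrix.mulVec, dotProduct]
    rw [Pi.add_apply, Pi.add_apply, h1, h2, hc]
  have hsqint : ∀ i, Integrable (fun ω => (f i ω + g i ω + c i) ^ 2) P := by
    intro i
    have hmem : MemLp (fun ω => f i ω + g i ω + c i) 2 P :=
      ((hfmem i).add (hgmem i)).add (memLp_const _)
    simpa [pow_two] using my_integrable_mul hmem hmem
  rw [affineRisk, integral_congr_ae (Filter.Eventually.of_forall hpt),
    integral_finset_sum _ (fun i _ => hsqint i)]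
  have hterm : ∀ i, ∫ ω, (f i ω + g i ω + c i) ^ 2 ∂P
      = (∑ j, ∑ j', B i j * B i j' * Sx j j')
        + (∑ k, ∑ k', W i k * W i k' * Se k k') + c i ^ 2 := by
    intro i
    rw [my_sq_expand (hfmem i) (hgmem i) (c i) (hf0 i) (hg0 i) (hfg0 i), hff i, hgg i]
  rw [Finset.sum_congr rfl (fun i _ => hterm i)]
  rw [Finset.sum_add_distrib, Finset.sum_add_distrib, my_trace_form, my_trace_form]



section matr
variable {n m : ℕ}

lemma my_psd_conj {p q : ℕ} {S : Matrix (Fin p) (Fin p) ℝ} (hS : S.PosSemidef)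
    (B : Matrix (Fin q) (Fin p) ℝ) : (B * S * Bᵀ).PosSemidef := by
  simpa [Matrix.conjTranspose_eq_transpose_of_trivial] using hS.mul_mul_conjTranspose_same B

lemma my_symm {p : ℕ} {S : Matrix (Fin p) (Fin p) ℝ} (hS : S.PosDef) : Sᵀ = S := by
  have := hS.isHermitian
  rwa [Matrix.IsHermitian, Matrix.conjTranspose_eq_transpose_of_trivial] at this

lemma my_M_posdef (A : Matrix (Fin m) (Fin n) ℝ)
    {Sx : Matrix (Fin n) (Fin n) ℝ} (hSxPD : Sx.PosDef)
    {Se : Matrix (Fin m) (Fin m) ℝ} (hSePD : Se.PosDef) :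
    (A * Sx * Aᵀ + Se).PosDef :=
  Matrix.PosDef.posSemidef_add (my_psd_conj hSxPD.posSemidef A) hSePD

lemma my_completion (A : Matrix (Fin m) (Fin n) ℝ)
    {Sx : Matrix (Fin n) (Fin n) ℝ} (hSxPD : Sx.PosDef)
    {Se : Matrix (Fin m) (Fin m) ℝ} (hSePD : Se.PosDef)
    (W : Matrix (Fin n) (Fin m) ℝ) :
    (W * A - 1) * Sx * (W * A - 1)ᵀ + W * Se * Wᵀ
      = (W - Sx * Aᵀ * (A * Sx * Aᵀ + Se)⁻¹) * (A * Sx * Aᵀ + Se)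
          * (W - Sx * Aᵀ * (A * Sx * Aᵀ + Se)⁻¹)ᵀ
        + (Sx - Sx * Aᵀ * (A * Sx * Aᵀ + Se)⁻¹ * (A * Sx)) := by
  set M := A * Sx * Aᵀ + Se with hMdef
  set W₀ := Sx * Aᵀ * M⁻¹ with hW₀def
  have hMpd : M.PosDef := my_M_posdef A hSxPD hSePD
  have hMdet : IsUnit M.det := hMpd.det_pos.ne'.isUnit
  have hSxT : Sxᵀ = Sx := my_symm hSxPD
  have hMT : Mᵀ = M := my_symm hMpd
  have hW₀M : W₀ * M = Sx * Aᵀ := by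
    rw [hW₀def, Matrix.mul_assoc, Matrix.nonsing_inv_mul _ hMdet, Matrix.mul_one]
  have hMW₀ : M * W₀ᵀ = A * Sx := by
    have h := congrArg Matrix.transpose hW₀M
    rw [Matrix.transpose_mul, hMT] at h
    rw [h, Matrix.transpose_mul, Matrix.transpose_transpose, hSxT]
  have e1 : (W * A - 1) * Sx * (W * A - 1)ᵀ
      = W * (A * (Sx * (Aᵀ * Wᵀ))) - W * (A * Sx) - Sx * (Aᵀ * Wᵀ) + Sx := by
    simp only [Matrix.transpose_sub, Matrix.transpose_mul, Matrix.transpose_one,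
      Matrix.sub_mul, Matrix.mul_sub, Matrix.mul_one, Matrix.one_mul, hSxT,
      Matrix.mul_assoc]
    abel
  have h1 : W * (M * W₀ᵀ) = W * (A * Sx) := by rw [hMW₀]
  have h2 : W₀ * (M * Wᵀ) = Sx * (Aᵀ * Wᵀ) := by
    rw [← Matrix.mul_assoc, hW₀M, Matrix.mul_assoc]
  have h3 : W₀ * (M * W₀ᵀ) = W₀ * (A * Sx) := by rw [hMW₀]
  have e2 : (W - W₀) * M * (W - W₀)ᵀ
      = W * (M * Wᵀ) - W * (A * Sx) - Sx * (Aᵀ * Wᵀ) + W₀ * (A * Sx) := by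
    simp only [Matrix.transpose_sub, Matrix.sub_mul, Matrix.mul_sub, Matrix.mul_assoc,
      h1, h2, h3]
    abel
  have e3 : W * (M * Wᵀ) = W * (A * (Sx * (Aᵀ * Wᵀ))) + W * (Se * Wᵀ) := by
    rw [hMdef]
    simp only [Matrix.add_mul, Matrix.mul_add, Matrix.mul_assoc]
  rw [e1, e2, e3, hW₀def]
  simp only [Matrix.mul_assoc]
  abel

end matr


section matriden
variable {n m : ℕ}

lemma my_W_eq (A : Matrix (Fin m) (Fin n) ℝ)
    {Sx : Matrix (Fin n) (Fin n) ℝ} (hSxPD : Sx.PosDef)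
    {Se : Matrix (Fin m) (Fin m) ℝ} (hSePD : Se.PosDef) :
    (Aᵀ * Se⁻¹ * A + Sx⁻¹)⁻¹ * (Aᵀ * Se⁻¹) = Sx * Aᵀ * (A * Sx * Aᵀ + Se)⁻¹ := by
  set K := Aᵀ * Se⁻¹ * A + Sx⁻¹ with hKdef
  set M := A * Sx * Aᵀ + Se with hMdef
  have hSxdet : IsUnit Sx.det := hSxPD.det_pos.ne'.isUnit
  have hSedet : IsUnit Se.det := hSePD.det_pos.ne'.isUnit
  have hMdet : IsUnit M.det := (my_M_posdef A hSxPD hSePD).det_pos.ne'.isUnit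
  have hKpd : K.PosDef := by
    have h1 : (Aᵀ * Se⁻¹ * A).PosSemidef := by
      have := my_psd_conj hSePD.inv.posSemidef Aᵀ
      simpa [Matrix.transpose_transpose] using this
    exact Matrix.PosDef.posSemidef_add h1 hSxPD.inv
  have hKdet : IsUnit K.det := hKpd.det_pos.ne'.isUnit
  have hKSA : K * (Sx * Aᵀ) = Aᵀ * Se⁻¹ * M := by
    have hx1 : Sx⁻¹ * (Sx * Aᵀ) = Aᵀ := by
      rw [← Matrix.mul_assoc, Matrix.nonsing_inv_mul _ hSxdet, Matrix.one_mul]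
    have he1 : Se⁻¹ * Se = 1 := Matrix.nonsing_inv_mul _ hSedet
    rw [hKdef, hMdef]
    simp only [Matrix.add_mul, Matrix.mul_add, Matrix.mul_assoc, hx1, he1, Matrix.mul_one]
  have l1 : K⁻¹ * (K * (Sx * Aᵀ)) = Sx * Aᵀ := by
    rw [← Matrix.mul_assoc, Matrix.nonsing_inv_mul _ hKdet, Matrix.one_mul]
  have l2 : Aᵀ * Se⁻¹ * M * M⁻¹ = Aᵀ * Se⁻¹ := by
    rw [Matrix.mul_assoc (Aᵀ * Se⁻¹), Matrix.mul_nonsing_inv _ hMdet, Matrix.mul_one]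
  calc K⁻¹ * (Aᵀ * Se⁻¹) = K⁻¹ * (Aᵀ * Se⁻¹ * M * M⁻¹) := by rw [l2]
    _ = K⁻¹ * (K * (Sx * Aᵀ) * M⁻¹) := by rw [hKSA]
    _ = K⁻¹ * (K * (Sx * Aᵀ)) * M⁻¹ := by simp only [Matrix.mul_assoc]
    _ = Sx * Aᵀ * M⁻¹ := by rw [l1]

lemma my_b_eq (A : Matrix (Fin m) (Fin n) ℝ)
    {Sx : Matrix (Fin n) (Fin n) ℝ} (hSxPD : Sx.PosDef)
    {Se : Matrix (Fin m) (Fin m) ℝ} (hSePD : Se.PosDef) :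
    (Aᵀ * Se⁻¹ * A + Sx⁻¹)⁻¹ * Sx⁻¹
      = 1 - Sx * Aᵀ * (A * Sx * Aᵀ + Se)⁻¹ * A := by
  set K := Aᵀ * Se⁻¹ * A + Sx⁻¹ with hKdef
  have hKpd : K.PosDef := by
    have h1 : (Aᵀ * Se⁻¹ * A).PosSemidef := by
      have := my_psd_conj hSePD.inv.posSemidef Aᵀ
      simpa [Matrix.transpose_transpose] using this
    exact Matrix.PosDef.posSemidef_add h1 hSxPD.inv
  have hKdet : IsUnit K.det := hKpd.det_pos.ne'.isUnit
  have hsub : Sx⁻¹ = K - Aᵀ * Se⁻¹ * A := by rw [hKdef, add_sub_cancel_left]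
  calc K⁻¹ * Sx⁻¹ = K⁻¹ * (K - Aᵀ * Se⁻¹ * A) := by rw [← hsub]
    _ = K⁻¹ * K - K⁻¹ * (Aᵀ * Se⁻¹ * A) := by rw [Matrix.mul_sub]
    _ = 1 - K⁻¹ * (Aᵀ * Se⁻¹) * A := by
        rw [Matrix.nonsing_inv_mul _ hKdet]
        simp only [Matrix.mul_assoc]
    _ = 1 - Sx * Aᵀ * (A * Sx * Aᵀ + Se)⁻¹ * A := by rw [my_W_eq A hSxPD hSePD]

end matriden


/-- **Optimal noise-weighted Tikhonov regularization.** For `x†` with mean `μx`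
and positive definite covariance `Sx`, `ε` with mean `0` and positive definite
covariance `Se`, uncorrelated: the choices `Ω = Se⁻¹`, any `R` with `RᵀR = Sx⁻¹`,
and `x₀ = μx` minimize the risk of the noise-weighted Tikhonov reconstruction
over all positive definite noise weights `O`, all `R'` with `AᵀO A + R'ᵀR'`
invertible, and all offsets; moreover the resulting affine map equals the LMMSE
estimator, so its risk equals the minimal risk over all affine maps. -/
theorem optimal_noise_weighted_tikhonov {Ωs : Type*} [MeasurableSpace Ωs]
    (P : Measure Ωs) [IsProbabilityMeasure P] {n m : ℕ}
    (x : Ωs → Fin n → ℝ) (ε : Ωs → Fin m → ℝ)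
    (hx : MemLp x 2 P) (hε : MemLp ε 2 P)
    (μx : Fin n → ℝ) (hμx : ∫ ω, x ω ∂P = μx)
    (Sx : Matrix (Fin n) (Fin n) ℝ) (hSxPD : Sx.PosDef)
    (hSx : ∀ i j, ∫ ω, (x ω i - μx i) * (x ω j - μx j) ∂P = Sx i j)
    (hεmean : ∫ ω, ε ω ∂P = 0)
    (Se : Matrix (Fin m) (Fin m) ℝ) (hSePD : Se.PosDef)
    (hSe : ∀ i j, ∫ ω, ε ω i * ε ω j ∂P = Se i j)
    (huncorr : ∀ i j, ∫ ω, (x ω i - μx i) * ε ω j ∂P = 0)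
    (A : Matrix (Fin m) (Fin n) ℝ)
    (R : Matrix (Fin n) (Fin n) ℝ) (hR : Rᵀ * R = Sx⁻¹) :
    (∀ (O : Matrix (Fin m) (Fin m) ℝ), O.PosDef →
      ∀ (R' : Matrix (Fin n) (Fin n) ℝ) (x₀' : Fin n → ℝ),
        IsUnit (Aᵀ * O * A + R'ᵀ * R') →
        tikhonovRisk P x ε A Se⁻¹ R μx ≤ tikhonovRisk P x ε A O R' x₀') ∧
    (Aᵀ * Se⁻¹ * A + Rᵀ * R)⁻¹ * (Aᵀ * Se⁻¹) = Sx * Aᵀ * (A * Sx * Aᵀ + Se)⁻¹ ∧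
    ((Aᵀ * Se⁻¹ * A + Rᵀ * R)⁻¹ * (Rᵀ * R)).mulVec μx =
      μx - (Sx * Aᵀ * (A * Sx * Aᵀ + Se)⁻¹ * A).mulVec μx ∧
    tikhonovRisk P x ε A Se⁻¹ R μx =
      sInf {r | ∃ (W : Matrix (Fin n) (Fin m) ℝ) (b : Fin n → ℝ),
        r = affineRisk P x ε A W b} := by

  have hW : (Aᵀ * Se⁻¹ * A + Rᵀ * R)⁻¹ * (Aᵀ * Se⁻¹)
      = Sx * Aᵀ * (A * Sx * Aᵀ + Se)⁻¹ := by
    rw [hR]; exact my_W_eq A hSxPD hSePD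
  have hb : ((Aᵀ * Se⁻¹ * A + Rᵀ * R)⁻¹ * (Rᵀ * R)).mulVec μx
      = μx - (Sx * Aᵀ * (A * Sx * Aᵀ + Se)⁻¹ * A).mulVec μx := by
    rw [hR, my_b_eq A hSxPD hSePD, Matrix.sub_mulVec, Matrix.one_mulVec]
  set M : Matrix (Fin m) (Fin m) ℝ := A * Sx * Aᵀ + Se with hMdef
  set W₀ : Matrix (Fin n) (Fin m) ℝ := Sx * Aᵀ * M⁻¹ with hW₀def
  set V : ℝ := Matrix.trace (Sx - Sx * Aᵀ * M⁻¹ * (A * Sx)) with hVdef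
  have hformula : ∀ (W : Matrix (Fin n) (Fin m) ℝ) (b : Fin n → ℝ),
      affineRisk P x ε A W b
        = Matrix.trace ((W - W₀) * M * (W - W₀)ᵀ) + V
          + ∑ i, ((W * A - 1).mulVec μx + b) i ^ 2 := by
    intro W b
    rw [affineRisk_eq P x ε hx hε μx hμx Sx hSx hεmean Se hSe huncorr A W b]
    rw [← Matrix.trace_add, my_completion A hSxPD hSePD W, Matrix.trace_add]
  have hlower : ∀ (W : Matrix (Fin n) (Fin m) ℝ) (b : Fin n → ℝ),
      V ≤ affineRisk P x ε A W b := by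
    intro W b
    rw [hformula W b]
    have h1 : 0 ≤ Matrix.trace ((W - W₀) * M * (W - W₀)ᵀ) :=
      my_trace_nonneg (my_psd_conj (my_M_posdef A hSxPD hSePD).posSemidef _)
    have h2 : 0 ≤ ∑ i, ((W * A - 1).mulVec μx + b) i ^ 2 :=
      Finset.sum_nonneg fun i _ => sq_nonneg _
    linarith
  have hcv : (W₀ * A - 1).mulVec μx + (μx - (W₀ * A).mulVec μx) = 0 := by
    rw [Matrix.sub_mulVec, Matrix.one_mulVec]
    abel
  have hopt : affineRisk P x ε A W₀ (μx - (W₀ * A).mulVec μx) = V := by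
    rw [hformula W₀ (μx - (W₀ * A).mulVec μx), sub_self, Matrix.zero_mul, Matrix.zero_mul,
      Matrix.trace_zero, hcv]
    simp
  have htik : tikhonovRisk P x ε A Se⁻¹ R μx = V := by
    unfold tikhonovRisk
    rw [hW, hb]
    exact hopt
  refine ⟨?_, hW, hb, ?_⟩
  · intro O hO R' x₀' hU
    rw [htik]
    unfold tikhonovRisk
    exact hlower _ _
  · rw [htik]
    have hmem : V ∈ {r | ∃ (W : Matrix (Fin n) (Fin m) ℝ) (b : Fin n → ℝ),
        r = affineRisk P x ε A W b} := ⟨W₀, μx - (W₀ * A).mulVec μx, hopt.symm⟩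
    have hlb : ∀ r ∈ {r | ∃ (W : Matrix (Fin n) (Fin m) ℝ) (b : Fin n → ℝ),
        r = affineRisk P x ε A W b}, V ≤ r := by
      rintro r ⟨W, b, rfl⟩
      exact hlower W b
    exact (le_antisymm (csInf_le ⟨V, hlb⟩ hmem) (le_csInf ⟨V, hmem⟩ hlb)).symm
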